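/- Assume μ > L_f and that the feasible set S = {x ∈ X : Ax = b} is nonempty. Fix z, z' ∈ E, let x̄ ∈ S minimize x ↦ f(x) + (μ/2)‖x − z‖² over S, and let x̄' ∈ S minimize x ↦ f(x) + (μ/2)‖x − z'‖² over S. Then [f(x̄') + (μ/2)‖x̄' − z'‖²] − [f(x̄) + (μ/2)‖x̄ − z‖²] ≤ μ·⟨z' − z, z − x̄⟩ + (μ²/(2(μ − L_f)))·‖z − z'‖². -/
import Mathlib


open MeasureTheory
open scoped RealInnerProductSpace

theorem stmt_6
    {E F : Type*}
    [NormedAddCommGroup E] [InnerProductSpace ℝ E] [FiniteDimensional ℝ E]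
    [NormedAddCommGroup F] [InnerProductSpace ℝ F] [FiniteDimensional ℝ F]
    (A : E →L[ℝ] F) (b : F) (X : Set E)
    (hXne : X.Nonempty) (hXcl : IsClosed X) (hXcv : Convex ℝ X)
    (f : E → ℝ) (f' : E → E) (Lf : ℝ) (hLf : 0 ≤ Lf)
    (hf : ∀ x, HasGradientAt f (f' x) x)
    (hlip : ∀ u v, ‖f' u - f' v‖ ≤ Lf * ‖u - v‖)
    (ρ μ : ℝ) (hρ : 0 ≤ ρ) (hμ : 0 < μ)
    (K : E → F → E → ℝ)
    (hK : ∀ x y z, K x y z =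
      f x + ⟪A x - b, y⟫ + (ρ/2) * ‖A x - b‖^2 + (μ/2) * ‖x - z‖^2)
    (hμLf : Lf < μ)
    (hfeas : ∃ w ∈ X, A w = b)
    (z z' : E) (xbar xbar' : E)
    (hxbar : (xbar ∈ X ∧ A xbar = b) ∧ ∀ w, w ∈ X → A w = b →
      f xbar + (μ/2) * ‖xbar - z‖^2 ≤ f w + (μ/2) * ‖w - z‖^2)
    (hxbar' : (xbar' ∈ X ∧ A xbar' = b) ∧ ∀ w, w ∈ X → A w = b →
      f xbar' + (μ/2) * ‖xbar' - z'‖^2 ≤ f w + (μ/2) * ‖w - z'‖^2) :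
    (f xbar' + (μ/2) * ‖xbar' - z'‖^2) - (f xbar + (μ/2) * ‖xbar - z‖^2)
      ≤ μ * ⟪z' - z, z - xbar⟫ + (μ^2/(2*(μ - Lf))) * ‖z - z'‖^2 := by
  have h1 := hxbar'.2 xbar hxbar.1.1 hxbar.1.2
  have hexp : ‖xbar - z'‖^2 = ‖xbar - z‖^2 + 2 * ⟪xbar - z, z - z'⟫ + ‖z - z'‖^2 := by
    have : xbar - z' = (xbar - z) + (z - z') := by abel
    rw [this, norm_add_sq_real]
  have hinner : ⟪z' - z, z - xbar⟫ = ⟪xbar - z, z - z'⟫ := by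
    have e1 : z' - z = -(z - z') := by abel
    have e2 : z - xbar = -(xbar - z) := by abel
    rw [e1, e2, inner_neg_neg, real_inner_comm]
  have hpos : 0 < μ - Lf := by linarith
  have hsq : (0:ℝ) ≤ ‖z - z'‖^2 := sq_nonneg _
  have hcoef : (μ/2) * ‖z - z'‖^2 ≤ (μ^2/(2*(μ - Lf))) * ‖z - z'‖^2 := by
    apply mul_le_mul_of_nonneg_right _ hsq
    rw [div_le_div_iff₀ (by linarith) (by linarith)]
    nlinarith
  rw [hinner]
  nlinarith [h1]
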